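/- (Lemma 2.2, exterior part.) Let Π ∈ M_n(ℂ) be a Hermitian unitary matrix (Π* = Π and Π² = 1). Let f : 𝕋 → M_n(ℂ) satisfy Π f(z) Π = −f(z) for every z ∈ 𝕋, and let (g₊, g₋) be a left canonical factorization datum for f. Then Π · (g₊(w̄) g₋(w)) · Π = −g₊(w̄) g₋(w) for every w in the closed unit disk 𝔻̄; that is, the exterior extension of f anticommutes with Π at every point. -/

import Mathlib

open Complex Matrix
open Topology

/-- The closed unit disk in `ℂ`. -/
def closedDisk : Set ℂ := {z : ℂ | ‖z‖ ≤ 1}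

/-- The open unit disk in `ℂ`. -/
def openDisk : Set ℂ := {z : ℂ | ‖z‖ < 1}

lemma closedDisk_eq : closedDisk = Metric.closedBall (0:ℂ) 1 := by
  ext z; simp [closedDisk, Metric.mem_closedBall, dist_zero_right]

lemma openDisk_eq : openDisk = Metric.ball (0:ℂ) 1 := by
  ext z; simp [openDisk, Metric.mem_ball, dist_zero_right]

lemma conj_mem_closedDisk {z : ℂ} (hz : z ∈ closedDisk) : (starRingEnd ℂ) z ∈ closedDisk := by
  simpa [closedDisk] using hz

lemma conj_mem_openDisk {z : ℂ} (hz : z ∈ openDisk) : (starRingEnd ℂ) z ∈ openDisk := by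
  simpa [openDisk] using hz

lemma openDisk_subset_closedDisk : openDisk ⊆ closedDisk := fun z hz => show ‖z‖ ≤ 1 from le_of_lt hz

/-- Anti-holomorphic reflection: if `v` has derivative `c` at `conj z`, then
`w ↦ conj (v (conj w))` has derivative `conj c` at `z`. -/
lemma hasDerivAt_conj_conj {v : ℂ → ℂ} {c z : ℂ}
    (hv : HasDerivAt v c ((starRingEnd ℂ) z)) :
    HasDerivAt (fun w => (starRingEnd ℂ) (v ((starRingEnd ℂ) w))) ((starRingEnd ℂ) c) z := by
  rw [hasDerivAt_iff_tendsto] at hv ⊢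
  have hconj : Filter.Tendsto (starRingEnd ℂ) (𝓝 z) (𝓝 ((starRingEnd ℂ) z)) :=
    (Complex.continuous_conj).tendsto z
  have h := hv.comp hconj
  refine h.congr (fun w => ?_)
  simp only [Function.comp]
  have : (starRingEnd ℂ) (v ((starRingEnd ℂ) w)) - (starRingEnd ℂ) (v ((starRingEnd ℂ) z))
      - (w - z) • (starRingEnd ℂ) c
      = (starRingEnd ℂ) (v ((starRingEnd ℂ) w) - v ((starRingEnd ℂ) z)
        - ((starRingEnd ℂ) w - (starRingEnd ℂ) z) • c) := by
    simp only [smul_eq_mul, map_sub, _root_.map_mul, Complex.conj_conj]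
  rw [this]
  rw [RCLike.norm_conj]
  congr 1
  rw [← map_sub, RCLike.norm_conj]

lemma differentiableOn_conj_conj {v : ℂ → ℂ} (hv : DifferentiableOn ℂ v openDisk) :
    DifferentiableOn ℂ (fun w => (starRingEnd ℂ) (v ((starRingEnd ℂ) w))) openDisk := by
  intro z hz
  have hopen : IsOpen openDisk := by rw [openDisk_eq]; exact Metric.isOpen_ball
  have hz' : (starRingEnd ℂ) z ∈ openDisk := conj_mem_openDisk hz
  have := (hv ((starRingEnd ℂ) z) hz').differentiableAt (hopen.mem_nhds hz')
  exact ((hasDerivAt_conj_conj this.hasDerivAt).differentiableAt).differentiableWithinAt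

/-- Max-modulus argument: a function holomorphic on the open disk and continuous on the
closed disk whose real part vanishes on the circle has vanishing real part on the disk. -/
lemma re_eq_zero_on_closedDisk {q : ℂ → ℂ} (hc : ContinuousOn q closedDisk)
    (hd : DifferentiableOn ℂ q openDisk) (hb : ∀ z : ℂ, ‖z‖ = 1 → (q z).re = 0) :
    ∀ z ∈ closedDisk, (q z).re = 0 := by
  have hU : Bornology.IsBounded (Metric.ball (0:ℂ) 1) := Metric.isBounded_ball
  have hclos : closure (Metric.ball (0:ℂ) 1) = Metric.closedBall 0 1 :=
    closure_ball 0 one_ne_zero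
  have hfront : frontier (Metric.ball (0:ℂ) 1) = Metric.sphere 0 1 :=
    frontier_ball 0 one_ne_zero
  have key : ∀ s : ℂ, s = 1 ∨ s = -1 → ∀ z ∈ closedDisk, (s * q z).re ≤ 0 := by
    intro s hs z hz
    have hdc : DiffContOnCl ℂ (fun w => Complex.exp (s * q w)) (Metric.ball 0 1) := by
      constructor
      · exact Complex.differentiable_exp.comp_differentiableOn
          (((differentiableOn_const s).mul hd).mono (by rw [openDisk_eq]))
      · rw [hclos]
        exact Complex.continuous_exp.comp_continuousOn
          (((continuousOn_const).mul hc).mono (by rw [closedDisk_eq]))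
    have hbound : ∀ w ∈ frontier (Metric.ball (0:ℂ) 1), ‖Complex.exp (s * q w)‖ ≤ 1 := by
      intro w hw
      rw [hfront, Metric.mem_sphere, dist_zero_right] at hw
      rw [Complex.norm_exp]
      have : (s * q w).re = 0 := by
        rcases hs with h | h <;> subst h <;> simp [hb w hw]
      rw [this, Real.exp_zero]
    have hz' : z ∈ closure (Metric.ball (0:ℂ) 1) := by
      rw [hclos]; rw [closedDisk_eq] at hz; exact hz
    have := Complex.norm_le_of_forall_mem_frontier_norm_le hU hdc hbound hz'
    rw [Complex.norm_exp] at this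
    calc (s * q z).re = Real.log (Real.exp ((s * q z).re)) := by rw [Real.log_exp]
      _ ≤ Real.log 1 := Real.log_le_log (Real.exp_pos _) this
      _ = 0 := Real.log_one
  intro z hz
  have h1 := key 1 (Or.inl rfl) z hz
  have h2 := key (-1) (Or.inr rfl) z hz
  simp only [one_mul] at h1
  simp only [neg_one_mul, Complex.neg_re, neg_nonpos] at h2
  linarith [h2]

/-- The key reflection principle: if `u, v` are holomorphic on the open disk, continuous on the
closed disk, and `u z = v (conj z)` on the unit circle, then this holds on the closed disk. -/
lemma eqOn_closedDisk {u v : ℂ → ℂ} (huc : ContinuousOn u closedDisk)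
    (hud : DifferentiableOn ℂ u openDisk) (hvc : ContinuousOn v closedDisk)
    (hvd : DifferentiableOn ℂ v openDisk)
    (hb : ∀ z : ℂ, ‖z‖ = 1 → u z = v ((starRingEnd ℂ) z)) :
    ∀ z ∈ closedDisk, u z = v ((starRingEnd ℂ) z) := by
  set vt : ℂ → ℂ := fun w => (starRingEnd ℂ) (v ((starRingEnd ℂ) w)) with hvt
  have hvtc : ContinuousOn vt closedDisk := by
    apply Complex.continuous_conj.comp_continuousOn
    exact hvc.comp Complex.continuous_conj.continuousOn (fun z hz => conj_mem_closedDisk hz)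
  have hvtd : DifferentiableOn ℂ vt openDisk := differentiableOn_conj_conj hvd
  have hq : ∀ z ∈ closedDisk, (u z - vt z).re = 0 := by
    apply re_eq_zero_on_closedDisk (huc.sub hvtc) (hud.sub hvtd)
    intro z hz
    rw [Pi.sub_apply, hb z hz]
    simp [hvt, Complex.sub_re, Complex.conj_re]
  have hr : ∀ z ∈ closedDisk, (-Complex.I * (u z + vt z)).re = 0 := by
    apply re_eq_zero_on_closedDisk
    · exact (continuousOn_const.mul (huc.add hvtc))
    · exact (differentiableOn_const _).mul (hud.add hvtd)
    · intro z hz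
      rw [hb z hz]
      simp [hvt, Complex.add_re, Complex.add_im, Complex.conj_re, Complex.conj_im]
  intro z hz
  have h1 := hq z hz
  have h2 := hr z hz
  have hre : (u z).re = (v ((starRingEnd ℂ) z)).re := by
    simp only [Complex.sub_re, hvt, Complex.conj_re] at h1
    linarith
  have him : (u z).im = (v ((starRingEnd ℂ) z)).im := by
    simp only [hvt] at h2
    simp only [Complex.mul_re, Complex.neg_re, Complex.neg_im, Complex.I_re, Complex.I_im,
      Complex.add_re, Complex.add_im, Complex.conj_re, Complex.conj_im] at h2
    linarith
  exact Complex.ext hre him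

section MatrixHelpers

variable {n : ℕ}

lemma inv_entry (A : Matrix (Fin n) (Fin n) ℂ) (i j : Fin n) :
    A⁻¹ i j = (A.det)⁻¹ * A.adjugate i j := by
  rw [Matrix.inv_def, Matrix.smul_apply, Ring.inverse_eq_inv', smul_eq_mul]

lemma differentiableOn_det {A : ℂ → Matrix (Fin n) (Fin n) ℂ}
    (h : ∀ i j, DifferentiableOn ℂ (fun z => A z i j) openDisk) :
    DifferentiableOn ℂ (fun z => (A z).det) openDisk := by
  simp_rw [Matrix.det_apply']
  apply DifferentiableOn.fun_sum
  intro σ _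
  exact (DifferentiableOn.fun_finset_prod (fun i _ => h (σ i) i)).const_mul _

lemma differentiableOn_adjugate {A : ℂ → Matrix (Fin n) (Fin n) ℂ}
    (h : ∀ i j, DifferentiableOn ℂ (fun z => A z i j) openDisk) (i j : Fin n) :
    DifferentiableOn ℂ (fun z => (A z).adjugate i j) openDisk := by
  simp_rw [Matrix.adjugate_apply]
  apply differentiableOn_det
  intro i' j'
  simp_rw [Matrix.updateRow_apply]
  by_cases hij : i' = j
  · simp [hij]
  · simpa [hij] using h i' j'

lemma differentiableOn_inv_entry {A : ℂ → Matrix (Fin n) (Fin n) ℂ}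
    (h : ∀ i j, DifferentiableOn ℂ (fun z => A z i j) openDisk)
    (hu : ∀ z ∈ openDisk, IsUnit (A z)) (i j : Fin n) :
    DifferentiableOn ℂ (fun z => (A z)⁻¹ i j) openDisk := by
  simp_rw [inv_entry]
  have hdet : ∀ z ∈ openDisk, (A z).det ≠ 0 := by
    intro z hz
    exact (Matrix.isUnit_iff_isUnit_det _ |>.mp (hu z hz)).ne_zero
  exact ((differentiableOn_det h).inv hdet).mul (differentiableOn_adjugate h i j)

lemma continuousOn_inv_entry {A : ℂ → Matrix (Fin n) (Fin n) ℂ}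
    (h : ContinuousOn A closedDisk)
    (hu : ∀ z ∈ closedDisk, IsUnit (A z)) (i j : Fin n) :
    ContinuousOn (fun z => (A z)⁻¹ i j) closedDisk := by
  simp_rw [inv_entry]
  have hdet : ContinuousOn (fun z => (A z).det) closedDisk :=
    (continuous_id.matrix_det).comp_continuousOn h
  have hdet0 : ∀ z ∈ closedDisk, (A z).det ≠ 0 := fun z hz =>
    (Matrix.isUnit_iff_isUnit_det _ |>.mp (hu z hz)).ne_zero
  exact (hdet.inv₀ hdet0).mul
    (((continuous_id.matrix_adjugate).matrix_elem i j).comp_continuousOn h)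

end MatrixHelpers

/-- A left canonical factorization datum for `f : 𝕋 → Mₙ(ℂ)`: a pair `(gp, gm)` of maps on the
closed unit disk, continuous there, holomorphic on the open disk, taking invertible values, with
`f z = gp z * gm z̄` on the unit circle. -/
structure LeftCanonicalFactorizationDatum (n : ℕ)
    (f gp gm : ℂ → Matrix (Fin n) (Fin n) ℂ) : Prop where
  cont_p : ContinuousOn gp closedDisk
  cont_m : ContinuousOn gm closedDisk
  hol_p : ∀ i j, DifferentiableOn ℂ (fun z => gp z i j) openDisk
  hol_m : ∀ i j, DifferentiableOn ℂ (fun z => gm z i j) openDisk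
  unit_p : ∀ z ∈ closedDisk, IsUnit (gp z)
  unit_m : ∀ z ∈ closedDisk, IsUnit (gm z)
  factor : ∀ z : ℂ, ‖z‖ = 1 → f z = gp z * gm (starRingEnd ℂ z)

/-- If the symbol `f` anticommutes with a Hermitian unitary `P` on the unit circle, then its
exterior extension `F(w) = g₊(w̄) g₋(w)` anticommutes with `P` at every point of the closed unit
disk. -/
theorem exterior_extension_anticommutes_with_chiral_symmetry
    {n : ℕ} (hn : 1 ≤ n) (P : Matrix (Fin n) (Fin n) ℂ)
    (hP : P.IsHermitian) (hP2 : P * P = 1)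
    (f gp gm : ℂ → Matrix (Fin n) (Fin n) ℂ)
    (hchiral : ∀ z : ℂ, ‖z‖ = 1 → P * f z * P = -(f z))
    (hg : LeftCanonicalFactorizationDatum n f gp gm) :
    ∀ w ∈ closedDisk,
      P * (gp (starRingEnd ℂ w) * gm w) * P = -(gp (starRingEnd ℂ w) * gm w) := by
  -- the two one-sided functions
  set M : ℂ → Matrix (Fin n) (Fin n) ℂ := fun z => (gp z)⁻¹ * P * gp z with hM
  set N : ℂ → Matrix (Fin n) (Fin n) ℂ := fun w => -(gm w * P * (gm w)⁻¹) with hN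
  have hgp_entry_cont : ∀ i j, ContinuousOn (fun z => gp z i j) closedDisk := by
    intro i j
    apply Continuous.comp_continuousOn (continuous_id.matrix_elem i j) hg.cont_p
  have hgm_entry_cont : ∀ i j, ContinuousOn (fun z => gm z i j) closedDisk := by
    intro i j
    apply Continuous.comp_continuousOn (continuous_id.matrix_elem i j) hg.cont_m
  have hup : ∀ z ∈ openDisk, IsUnit (gp z) := fun z hz =>
    hg.unit_p z (openDisk_subset_closedDisk hz)
  have hum : ∀ z ∈ openDisk, IsUnit (gm z) := fun z hz =>
    hg.unit_m z (openDisk_subset_closedDisk hz)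
  -- entrywise regularity of M and N
  have hMd : ∀ i j, DifferentiableOn ℂ (fun z => M z i j) openDisk := by
    intro i j
    simp only [hM, Matrix.mul_apply]
    apply DifferentiableOn.fun_sum
    intro l _
    apply DifferentiableOn.mul
    · apply DifferentiableOn.fun_sum
      intro k _
      exact (differentiableOn_inv_entry hg.hol_p hup i k).mul (differentiableOn_const _)
    · exact hg.hol_p l j
  have hNd : ∀ i j, DifferentiableOn ℂ (fun z => N z i j) openDisk := by
    intro i j
    simp only [hN, Matrix.neg_apply, Matrix.mul_apply]
    apply DifferentiableOn.neg
    apply DifferentiableOn.fun_sum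
    intro l _
    apply DifferentiableOn.mul
    · apply DifferentiableOn.fun_sum
      intro k _
      exact (hg.hol_m i k).mul (differentiableOn_const _)
    · exact differentiableOn_inv_entry hg.hol_m hum l j
  have hMc : ∀ i j, ContinuousOn (fun z => M z i j) closedDisk := by
    intro i j
    simp only [hM, Matrix.mul_apply]
    apply continuousOn_finset_sum
    intro l _
    apply ContinuousOn.mul
    · apply continuousOn_finset_sum
      intro k _
      exact (continuousOn_inv_entry hg.cont_p hg.unit_p i k).mul continuousOn_const
    · exact hgp_entry_cont l j
  have hNc : ∀ i j, ContinuousOn (fun z => N z i j) closedDisk := by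
    intro i j
    simp only [hN, Matrix.neg_apply, Matrix.mul_apply]
    apply ContinuousOn.neg
    apply continuousOn_finset_sum
    intro l _
    apply ContinuousOn.mul
    · apply continuousOn_finset_sum
      intro k _
      exact (hgm_entry_cont i k).mul continuousOn_const
    · exact continuousOn_inv_entry hg.cont_m hg.unit_m l j
  -- boundary identity
  have hbdry : ∀ z : ℂ, ‖z‖ = 1 → M z = N ((starRingEnd ℂ) z) := by
    intro z hz
    have hz1 : z ∈ closedDisk := le_of_eq hz
    have hz2 : (starRingEnd ℂ) z ∈ closedDisk := conj_mem_closedDisk hz1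
    set a := gp z
    set b := gm ((starRingEnd ℂ) z)
    have ha : IsUnit a.det := (Matrix.isUnit_iff_isUnit_det _).mp (hg.unit_p z hz1)
    have hb : IsUnit b.det := (Matrix.isUnit_iff_isUnit_det _).mp (hg.unit_m _ hz2)
    have hbb : b * b⁻¹ = 1 := Matrix.mul_nonsing_inv b hb
    have haa : a⁻¹ * a = 1 := Matrix.nonsing_inv_mul a ha
    have hE : P * (a * b) * P = -(a * b) := by
      have := hchiral z hz
      rw [hg.factor z hz] at this
      exact this
    have e2 : P * (a * b) = -(a * b) * P := by
      have e1 : P * (a * b) * P * P = -(a * b) * P := by rw [hE]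
      rwa [mul_assoc (P * (a * b)) P P, hP2, mul_one] at e1
    show a⁻¹ * P * a = -(b * P * b⁻¹)
    calc a⁻¹ * P * a = a⁻¹ * (P * (a * b)) * b⁻¹ := by
          rw [show a⁻¹ * (P * (a * b)) * b⁻¹ = a⁻¹ * P * a * (b * b⁻¹) by noncomm_ring,
            hbb, mul_one]
      _ = a⁻¹ * (-(a * b) * P) * b⁻¹ := by rw [e2]
      _ = -(b * P * b⁻¹) := by
          rw [show a⁻¹ * (-(a * b) * P) * b⁻¹ = -((a⁻¹ * a) * (b * P * b⁻¹)) by noncomm_ring,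
            haa, one_mul]
  -- extend to the closed disk entrywise
  have hext : ∀ w ∈ closedDisk, M ((starRingEnd ℂ) w) = N w := by
    intro w hw
    have hw' : (starRingEnd ℂ) w ∈ closedDisk := conj_mem_closedDisk hw
    ext i j
    have := eqOn_closedDisk (hMc i j) (hMd i j) (hNc i j) (hNd i j)
      (fun z hz => congrFun (congrFun (hbdry z hz) i) j) ((starRingEnd ℂ) w) hw'
    simpa using this
  -- conclude
  intro w hw
  have hw' : (starRingEnd ℂ) w ∈ closedDisk := conj_mem_closedDisk hw
  set a := gp ((starRingEnd ℂ) w)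
  set b := gm w
  have ha : IsUnit a.det := (Matrix.isUnit_iff_isUnit_det _).mp (hg.unit_p _ hw')
  have hb : IsUnit b.det := (Matrix.isUnit_iff_isUnit_det _).mp (hg.unit_m _ hw)
  have hkey : a⁻¹ * P * a = -(b * P * b⁻¹) := hext w hw
  have haa' : a * a⁻¹ = 1 := Matrix.mul_nonsing_inv a ha
  have hbb' : b⁻¹ * b = 1 := Matrix.nonsing_inv_mul b hb
  have e2 : P * (a * b) = -(a * b * P) := by
    calc P * (a * b) = a * (a⁻¹ * P * a) * b := by
          rw [show a * (a⁻¹ * P * a) * b = (a * a⁻¹) * (P * (a * b)) by noncomm_ring,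
            haa', one_mul]
      _ = a * -(b * P * b⁻¹) * b := by rw [hkey]
      _ = -(a * b * P) := by
          rw [show a * -(b * P * b⁻¹) * b = -((a * b * P) * (b⁻¹ * b)) by noncomm_ring,
            hbb', mul_one]
  calc P * (a * b) * P = -(a * b * P) * P := by rw [e2]
    _ = -(a * b) := by
        rw [show -(a * b * P) * P = -((a * b) * (P * P)) by noncomm_ring, hP2, mul_one]
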